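/- Let K = HahnSeries ℝ ℂ be the field of generalized Laurent series with complex coefficients and real exponents, and for λ ∈ ℝ write s^λ ∈ K for the monomial HahnSeries.single λ 1 (so s = s¹). Let n and k be integers with 0 ≤ k and k+2 ≤ n, and let λ be a real number with 0 < λ < (n−k−1)/(n+1). Then every nonzero z ∈ K satisfying z^{n−k}·(z + s^{−λ}·z^{n−k})^{k+1} = s has either ord(z) = 1/(n+1) or ord(z) = λ/(n−k−1), where ord(z) denotes the smallest exponent in the support of z. -/

import Mathlib

open HahnSeries

/-- The field of generalized Laurent series with complex coefficients and real exponents. -/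
abbrev GenLaurent : Type := HahnSeries ℝ ℂ

/-- The monomial `s^λ`. -/
noncomputable def sPow (l : ℝ) : GenLaurent := HahnSeries.single l (1 : ℂ)

lemma sPow_ne_zero (l : ℝ) : sPow l ≠ 0 := by
  rw [sPow]; exact single_ne_zero one_ne_zero

lemma sPow_order (l : ℝ) : (sPow l).order = l := by
  rw [sPow]; exact order_single one_ne_zero

lemma order_add_left' {x y : GenLaurent} (hx : x ≠ 0) (hy : y ≠ 0)
    (h : x.order < y.order) : (x + y).order = x.order := by
  have h' : x.orderTop < y.orderTop := by
    rw [← order_eq_orderTop_of_ne_zero hx, ← order_eq_orderTop_of_ne_zero hy]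
    exact_mod_cast h
  have ht := orderTop_add_eq_left h'
  have hne : x + y ≠ 0 := by
    intro h0
    rw [h0] at ht
    rw [← order_eq_orderTop_of_ne_zero hx] at ht
    simp [orderTop_zero] at ht
  rw [← order_eq_orderTop_of_ne_zero hne, ← order_eq_orderTop_of_ne_zero hx] at ht
  exact_mod_cast ht

/-- In the small-blowup regime `0 < λ < (n−k−1)/(n+1)`, every root of the cleared critical
point equation `z^{n−k}(z + s^{−λ} z^{n−k})^{k+1} = s` has order `1/(n+1)` or `λ/(n−k−1)`. -/
theorem order_of_root_two_slopes (n k : ℕ) (hk : k + 2 ≤ n) (lam : ℝ)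
    (hlam : 0 < lam) (hlam' : lam < ((n : ℝ) - k - 1) / ((n : ℝ) + 1)) :
    ∀ z : GenLaurent, z ≠ 0 →
      z ^ (n - k) * (z + sPow (-lam) * z ^ (n - k)) ^ (k + 1) = sPow 1 →
      z.order = 1 / ((n : ℝ) + 1) ∨ z.order = lam / ((n : ℝ) - k - 1) := by
  intro z hz heq
  have hkn : k ≤ n := by omega
  have hMcast : ((n - k : ℕ) : ℝ) = (n : ℝ) - k := by
    rw [Nat.cast_sub hkn]
  have hk2 : ((k : ℝ)) + 2 ≤ (n : ℝ) := by exact_mod_cast hk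
  have hM1 : (0 : ℝ) < (n : ℝ) - k - 1 := by linarith
  have hN1 : (0 : ℝ) < (n : ℝ) + 1 := by positivity
  have hzp : z ^ (n - k) ≠ 0 := pow_ne_zero _ hz
  have hy : sPow (-lam) * z ^ (n - k) ≠ 0 := mul_ne_zero (sPow_ne_zero _) hzp
  have hyord : (sPow (-lam) * z ^ (n - k)).order
      = -lam + ((n : ℝ) - k) * z.order := by
    rw [order_mul (sPow_ne_zero _) hzp, order_pow, sPow_order, nsmul_eq_mul, hMcast]
  by_cases hcase : z.order = lam / ((n : ℝ) - k - 1)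
  · exact Or.inr hcase
  · have hne : z.order ≠ -lam + ((n : ℝ) - k) * z.order := by
      intro h
      apply hcase
      rw [eq_div_iff (ne_of_gt hM1)]
      linarith
    rcases lt_or_gt_of_ne hne with hlt | hgt
    · -- slope 1/(n+1)
      have hw : (z + sPow (-lam) * z ^ (n - k)).order = z.order := by
        rw [← hyord] at hlt
        exact order_add_left' hz hy hlt
      have hwne : z + sPow (-lam) * z ^ (n - k) ≠ 0 := by
        intro h0
        apply hne
        have hzeq : z = -(sPow (-lam) * z ^ (n - k)) :=
          eq_neg_iff_add_eq_zero.mpr h0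
        have h1 := congrArg HahnSeries.order hzeq
        rw [order_neg] at h1
        exact h1.trans hyord
      have hords := congrArg HahnSeries.order heq
      rw [order_mul hzp (pow_ne_zero _ hwne), order_pow, order_pow, hw,
        sPow_order, nsmul_eq_mul, nsmul_eq_mul, hMcast] at hords
      left
      rw [eq_div_iff (ne_of_gt hN1)]
      push_cast at hords
      linarith
    · -- impossible middle slope
      exfalso
      have hw : (z + sPow (-lam) * z ^ (n - k)).order
          = -lam + ((n : ℝ) - k) * z.order := by
        rw [add_comm z, ← hyord]
        rw [← hyord] at hgt
        exact order_add_left' hy hz hgt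
      have hwne : z + sPow (-lam) * z ^ (n - k) ≠ 0 := by
        intro h0
        apply hne
        have hzeq : z = -(sPow (-lam) * z ^ (n - k)) :=
          eq_neg_iff_add_eq_zero.mpr h0
        have h1 := congrArg HahnSeries.order hzeq
        rw [order_neg] at h1
        exact h1.trans hyord
      have hords := congrArg HahnSeries.order heq
      rw [order_mul hzp (pow_ne_zero _ hwne), order_pow, order_pow, hw,
        sPow_order, nsmul_eq_mul, nsmul_eq_mul, hMcast] at hords
      push_cast at hords
      rw [lt_div_iff₀ hN1] at hlam'
      have hnk : (0:ℝ) < ((k:ℝ) + 2) * ((n:ℝ) - k) := by nlinarith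
      have h1 : ((n:ℝ) - k - 1) * z.order < lam := by nlinarith [hgt]
      have h3 := mul_lt_mul_of_pos_left h1 hnk
      have h5 : ((n:ℝ) - k - 1) * ((((k:ℝ) + 2) * ((n:ℝ) - k)) * z.order)
          = ((n:ℝ) - k - 1) * (1 + ((k:ℝ) + 1) * lam) := by
        linear_combination ((n:ℝ) - k - 1) * hords
      nlinarith [h3, h5, hlam', hlam]
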